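/- Let σ be L-Lipschitz with σ(0)=0, Φ a set of n coordinate-projection patches with overlap parameter O_Φ, and let H be the class of functions x ↦ uᵀσ(Wx) where ‖u‖ ≤ b, W ∈ ℝ^{n×d} conforms to Φ and has spectral norm ‖W‖ ≤ B. Then the Rademacher complexity of H on any m points of Euclidean norm at most b_x is at most b·B·b_x·L·√(2 O_Φ / m). -/

import Mathlib

/-- Euclidean norm of a vector in `ℝ^d`. -/
noncomputable def euclNorm {d : ℕ} (x : Fin d → ℝ) : ℝ := Real.sqrt (∑ i, x i ^ 2)

/-- Spectral norm of a matrix: `sup_{‖x‖=1} ‖Mx‖`. -/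
noncomputable def specNorm {n d : ℕ} (M : Matrix (Fin n) (Fin d) ℝ) : ℝ :=
  sSup {r : ℝ | ∃ x : Fin d → ℝ, euclNorm x = 1 ∧ r = euclNorm (M.mulVec x)}

/-- Expectation over i.i.d. uniform `{-1,+1}` signs `ε : Fin m → ℝ`. -/
noncomputable def rademacherExp (m : ℕ) (f : (Fin m → ℝ) → ℝ) : ℝ :=
  (∑ ε : Fin m → Bool, f (fun i => if ε i then 1 else -1)) / 2 ^ m

/-- The matrix conforming to patches `φ` with filter `w`: row `j` embeds `w` in the
coordinates selected by `φ_j`, so that `(Wx)_j = ⟨w, φ_j(x)⟩`. -/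
noncomputable def patchMatrix {n n' d : ℕ} (φ : Fin n → Fin n' → Fin d)
    (w : Fin n' → ℝ) : Matrix (Fin n) (Fin d) ℝ :=
  fun j l => ∑ r, if φ j r = l then w r else 0

open Finset

namespace RLM16


noncomputable def rsign (c : Bool) : ℝ := if c then 1 else -1

lemma rsign_mul_self (c : Bool) : rsign c * rsign c = 1 := by cases c <;> norm_num [rsign]

lemma rsign_not (c : Bool) : rsign (!c) = - rsign c := by cases c <;> simp [rsign]

lemma rsign_cases (c : Bool) : rsign c = 1 ∨ rsign c = -1 := by cases c <;> simp [rsign]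

lemma tpl_core' {P M q r : ℝ} (hP : 0 ≤ P) (hM : 0 ≤ M)
    (h1 : P ≤ q) (h2 : M ≤ q) (h3 : P + M ≤ q + r) : P^2 + M^2 ≤ q^2 + r^2 := by
  rcases le_total M r with hm | hm
  · have hr : 0 ≤ r := hM.trans hm
    nlinarith [mul_nonneg (sub_nonneg.2 h1) (show (0:ℝ) ≤ q + P by linarith),
      mul_nonneg (sub_nonneg.2 hm) (show (0:ℝ) ≤ r + M by linarith)]
  · have h4 : P ≤ q + r - M := by linarith
    nlinarith [mul_nonneg (sub_nonneg.2 h4) (show (0:ℝ) ≤ q + r - M + P by linarith),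
      mul_nonneg (sub_nonneg.2 hm) (sub_nonneg.2 h2)]

lemma tpl_core {P M Q R : ℝ} (hP : 0 ≤ P) (hM : 0 ≤ M)
    (h1 : P ≤ max Q R) (h2 : M ≤ max Q R) (h3 : P + M ≤ Q + R) :
    P^2 + M^2 ≤ Q^2 + R^2 := by
  have h3' : P + M ≤ max Q R + min Q R := by rw [max_add_min]; exact h3
  have := tpl_core' hP hM h1 h2 h3'
  rcases le_total Q R with h | h
  · rw [max_eq_right h, min_eq_left h] at this; linarith
  · rw [max_eq_left h, min_eq_right h] at this; linarith

lemma tpl_finset {α : Type*} (s : Finset α) (hs : s.Nonempty) (A g h : α → ℝ)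
    (hb : ∀ a ∈ s, |g a| ≤ |h a|)
    (hl : ∀ a ∈ s, ∀ b ∈ s, |g a - g b| ≤ |h a - h b|)
    (hP : 0 ≤ s.sup' hs (fun a => A a + g a)) (hM : 0 ≤ s.sup' hs (fun a => A a - g a)) :
    (s.sup' hs (fun a => A a + g a))^2 + (s.sup' hs (fun a => A a - g a))^2
      ≤ (s.sup' hs (fun a => A a + h a))^2 + (s.sup' hs (fun a => A a - h a))^2 := by
  obtain ⟨a1, ha1, e1⟩ := Finset.exists_mem_eq_sup' hs (fun a => A a + g a)
  obtain ⟨a2, ha2, e2⟩ := Finset.exists_mem_eq_sup' hs (fun a => A a - g a)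
  rw [e1, e2]
  rw [e1] at hP; rw [e2] at hM
  have lsupP : ∀ a ∈ s, A a + h a ≤ s.sup' hs (fun a => A a + h a) :=
    fun a ha => Finset.le_sup' (f := fun a => A a + h a) ha
  have lsupM : ∀ a ∈ s, A a - h a ≤ s.sup' hs (fun a => A a - h a) :=
    fun a ha => Finset.le_sup' (f := fun a => A a - h a) ha
  have key1 : ∀ a ∈ s, A a + g a ≤ max (s.sup' hs (fun a => A a + h a)) (s.sup' hs (fun a => A a - h a)) := by
    intro a ha
    have hga : g a ≤ |h a| := le_trans (le_abs_self _) (hb a ha)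
    rcases le_total 0 (h a) with hh | hh
    · rw [abs_of_nonneg hh] at hga
      exact le_trans (by linarith [lsupP a ha] : A a + g a ≤ s.sup' hs (fun a => A a + h a)) (le_max_left _ _)
    · rw [abs_of_nonpos hh] at hga
      exact le_trans (by linarith [lsupM a ha] : A a + g a ≤ s.sup' hs (fun a => A a - h a)) (le_max_right _ _)
  have key2 : ∀ a ∈ s, A a - g a ≤ max (s.sup' hs (fun a => A a + h a)) (s.sup' hs (fun a => A a - h a)) := by
    intro a ha
    have hga : -g a ≤ |h a| := le_trans (neg_le_abs _) (hb a ha)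
    rcases le_total 0 (h a) with hh | hh
    · rw [abs_of_nonneg hh] at hga
      exact le_trans (by linarith [lsupP a ha] : A a - g a ≤ s.sup' hs (fun a => A a + h a)) (le_max_left _ _)
    · rw [abs_of_nonpos hh] at hga
      exact le_trans (by linarith [lsupM a ha] : A a - g a ≤ s.sup' hs (fun a => A a - h a)) (le_max_right _ _)
  have key3 : (A a1 + g a1) + (A a2 - g a2) ≤ (s.sup' hs (fun a => A a + h a)) + (s.sup' hs (fun a => A a - h a)) := by
    have habs : g a1 - g a2 ≤ |h a1 - h a2| := le_trans (le_abs_self _) (hl a1 ha1 a2 ha2)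
    rcases le_total (h a2) (h a1) with hh | hh
    · rw [abs_of_nonneg (by linarith)] at habs
      linarith [lsupP a1 ha1, lsupM a2 ha2]
    · rw [abs_of_nonpos (by linarith)] at habs
      linarith [lsupP a2 ha2, lsupM a1 ha1]
  exact tpl_core hP hM (key1 a1 ha1) (key2 a2 ha2) key3

def flipAt {m : ℕ} (K : Fin m) : (Fin m → Bool) ≃ (Fin m → Bool) :=
  Function.Involutive.toPerm (fun ε => Function.update ε K (!(ε K)))
    (by
      intro ε; funext i
      rcases eq_or_ne i K with rfl | h
      · simp
      · simp [Function.update_of_ne h])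

lemma flipAt_same {m : ℕ} (K : Fin m) (ε : Fin m → Bool) : (flipAt K) ε K = !(ε K) := by
  show Function.update ε K (!(ε K)) K = _
  simp

lemma flipAt_ne {m : ℕ} (K : Fin m) (ε : Fin m → Bool) (i : Fin m) (h : i ≠ K) :
    (flipAt K) ε i = ε i := by
  show Function.update ε K (!(ε K)) i = ε i
  simp [Function.update_of_ne h]

def negAll {m : ℕ} : (Fin m → Bool) ≃ (Fin m → Bool) :=
  Function.Involutive.toPerm (fun ε => fun i => !(ε i)) (by intro ε; funext i; simp)

lemma negAll_apply {m : ℕ} (ε : Fin m → Bool) (i : Fin m) : (negAll ε) i = !(ε i) := by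
  rfl

lemma card_bool_fun (m : ℕ) : (Finset.univ : Finset (Fin m → Bool)).card = 2^m := by
  simp [Finset.card_univ]

lemma sum_rsign_mul (m : ℕ) (i i' : Fin m) :
    ∑ ε : Fin m → Bool, rsign (ε i) * rsign (ε i') = if i = i' then (2:ℝ)^m else 0 := by
  rcases eq_or_ne i i' with rfl | h
  · simp only [if_pos rfl]
    rw [Finset.sum_congr rfl (fun ε _ => rsign_mul_self (ε i))]
    rw [Finset.sum_const, card_bool_fun]
    push_cast
    ring
  · simp only [if_neg h]
    have h1 : ∑ ε : Fin m → Bool, rsign ((flipAt i) ε i) * rsign ((flipAt i) ε i')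
        = ∑ ε : Fin m → Bool, rsign (ε i) * rsign (ε i') := Equiv.sum_comp (flipAt i) (fun ε => rsign (ε i) * rsign (ε i'))
    have h2 : ∀ ε : Fin m → Bool, rsign ((flipAt i) ε i) * rsign ((flipAt i) ε i')
        = -(rsign (ε i) * rsign (ε i')) := by
      intro ε
      rw [flipAt_same, flipAt_ne i ε i' h.symm, rsign_not]
      ring
    rw [Finset.sum_congr rfl (fun ε _ => h2 ε), Finset.sum_neg_distrib] at h1
    linarith

/-- Second-moment contraction: the expected square of the supremum of the Rademacher
average of `σ`-composed linear functions is at most that of the linear ones. -/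
lemma smc (m n' : ℕ) (L B : ℝ) (hL : 0 ≤ L) (hB : 0 ≤ B)
    (σ : ℝ → ℝ) (hσ : ∀ a c : ℝ, |σ a - σ c| ≤ L * |a - c|) (hσ0 : σ 0 = 0)
    (z : Fin m → Fin n' → ℝ)
    (W : Finset (Fin n' → ℝ)) (hW0 : (0 : Fin n' → ℝ) ∈ W)
    (hWB : ∀ w ∈ W, ∑ r, w r ^ 2 ≤ B ^ 2) :
    ∑ ε : Fin m → Bool,
        (W.sup' ⟨0, hW0⟩ (fun w => ∑ i, rsign (ε i) * σ (∑ r, w r * z i r)))^2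
      ≤ 2 ^ m * (L^2 * B^2 * ∑ i, ∑ r, z i r ^ 2) := by
  classical
  have hne : W.Nonempty := ⟨0, hW0⟩
  set t : (Fin n' → ℝ) → Fin m → ℝ := fun w i => ∑ r, w r * z i r with ht
  have ht0 : ∀ i, t 0 i = 0 := by intro i; simp [t]
  set C : ℕ → Fin m → (Fin n' → ℝ) → ℝ :=
    fun k i w => if (i:ℕ) < k then L * t w i else σ (t w i) with hC
  have hCzero : ∀ k i, C k i (0 : Fin n' → ℝ) = 0 := by
    intro k i
    by_cases h : (i:ℕ) < k <;> simp [C, h, ht0, hσ0]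
  set F : ℕ → (Fin m → Bool) → ℝ :=
    fun k ε => W.sup' hne (fun w => ∑ i, rsign (ε i) * C k i w) with hF
  -- one contraction step
  have step : ∀ k, (∑ ε : Fin m → Bool, (F k ε)^2) ≤ ∑ ε : Fin m → Bool, (F (k+1) ε)^2 := by
    intro k
    by_cases hk : k < m
    · set K : Fin m := ⟨k, hk⟩ with hK
      have key : ∀ ε : Fin m → Bool,
          (F k ε)^2 + (F k ((flipAt K) ε))^2 ≤ (F (k+1) ε)^2 + (F (k+1) ((flipAt K) ε))^2 := by
        intro ε
        set A : (Fin n' → ℝ) → ℝ := fun w => ∑ i ∈ univ.erase K, rsign (ε i) * C k i w with hA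
        have hCKk : ∀ w, C k K w = σ (t w K) := by intro w; simp [C, hK]
        have hCKk1 : ∀ w, C (k+1) K w = L * t w K := by simp [C, hK]
        have hCsame : ∀ i, i ≠ K → ∀ w, C (k+1) i w = C k i w := by
          intro i hiK w
          have hne' : (i:ℕ) ≠ k := fun hh => hiK (Fin.ext hh)
          by_cases h : (i:ℕ) < k
          · simp [C, h, Nat.lt_succ_of_lt h]
          · have h2 : ¬ ((i:ℕ) < k+1) := by omega
            simp [C, h, h2]
        have hflipA : ∀ w, ∑ i ∈ univ.erase K, rsign (((flipAt K) ε) i) * C k i w = A w := by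
          intro w
          refine Finset.sum_congr rfl fun i hi => ?_
          rw [flipAt_ne K ε i (Finset.mem_erase.mp hi).1]
        have hsplit : ∀ (k' : ℕ) (ε' : Fin m → Bool) (w : Fin n' → ℝ),
            ∑ i, rsign (ε' i) * C k' i w
              = (∑ i ∈ univ.erase K, rsign (ε' i) * C k' i w) + rsign (ε' K) * C k' K w := by
          intro k' ε' w
          rw [Finset.sum_erase_add univ _ (Finset.mem_univ K)]
        -- identify the four sup's
        set s : ℝ := rsign (ε K) with hs
        have e1 : F k ε = W.sup' hne (fun w => A w + s * σ (t w K)) := by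
          apply Finset.sup'_congr hne rfl
          intro w _
          rw [hsplit k ε w, hCKk]
        have e2 : F k ((flipAt K) ε) = W.sup' hne (fun w => A w - s * σ (t w K)) := by
          apply Finset.sup'_congr hne rfl
          intro w _
          rw [hsplit k _ w, hflipA, hCKk, flipAt_same, rsign_not]
          ring
        have e3 : F (k+1) ε = W.sup' hne (fun w => A w + s * (L * t w K)) := by
          apply Finset.sup'_congr hne rfl
          intro w _
          rw [hsplit (k+1) ε w, hCKk1]
          congr 1
          refine Finset.sum_congr rfl fun i hi => ?_
          rw [hCsame i (Finset.mem_erase.mp hi).1]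
        have e4 : F (k+1) ((flipAt K) ε) = W.sup' hne (fun w => A w - s * (L * t w K)) := by
          apply Finset.sup'_congr hne rfl
          intro w _
          rw [hsplit (k+1) _ w, hCKk1, flipAt_same, rsign_not]
          have : ∑ i ∈ univ.erase K, rsign (((flipAt K) ε) i) * C (k+1) i w = A w := by
            refine Finset.sum_congr rfl fun i hi => ?_
            rw [flipAt_ne K ε i (Finset.mem_erase.mp hi).1, hCsame i (Finset.mem_erase.mp hi).1]
          rw [this]
          ring
        rw [e1, e2, e3, e4]
        have hA0 : A 0 = 0 := by
          simp only [hA]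
          rw [Finset.sum_congr rfl (fun i _ => by rw [hCzero k i, mul_zero])]
          exact Finset.sum_const_zero
        have habs_s : |s| = 1 := by rcases rsign_cases (ε K) with h | h <;> rw [hs] at * <;> simp [h]
        apply tpl_finset W hne A (fun w => s * σ (t w K)) (fun w => s * (L * t w K))
        · intro w _
          rw [abs_mul, abs_mul, habs_s, one_mul, one_mul]
          have h1 := hσ (t w K) 0
          rw [hσ0, sub_zero, sub_zero] at h1
          rw [abs_mul, abs_of_nonneg hL]
          exact h1
        · intro w _ w' _
          have h1 := hσ (t w K) (t w' K)
          calc |s * σ (t w K) - s * σ (t w' K)| = |s| * |σ (t w K) - σ (t w' K)| := by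
                rw [← abs_mul]; ring_nf
            _ = |σ (t w K) - σ (t w' K)| := by rw [habs_s, one_mul]
            _ ≤ L * |t w K - t w' K| := h1
            _ = |s * (L * t w K) - s * (L * t w' K)| := by
                rw [show s * (L * t w K) - s * (L * t w' K) = (s * L) * (t w K - t w' K) by ring,
                  abs_mul, abs_mul, habs_s, one_mul, abs_of_nonneg hL]
        · apply le_trans (le_of_eq ?_) (Finset.le_sup' (f := fun w => A w + s * σ (t w K)) hW0)
          rw [hA0, ht0, hσ0]
          ring
        · apply le_trans (le_of_eq ?_) (Finset.le_sup' (f := fun w => A w - s * σ (t w K)) hW0)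
          rw [hA0, ht0, hσ0]
          ring
      -- sum the pairwise bound
      have hsum : ∀ (G : (Fin m → Bool) → ℝ), ∑ ε : Fin m → Bool, G ((flipAt K) ε) = ∑ ε : Fin m → Bool, G ε :=
        fun G => Equiv.sum_comp (flipAt K) G
      have h2 : ∑ ε : Fin m → Bool, ((F k ε)^2 + (F k ((flipAt K) ε))^2)
          ≤ ∑ ε : Fin m → Bool, ((F (k+1) ε)^2 + (F (k+1) ((flipAt K) ε))^2) :=
        Finset.sum_le_sum fun ε _ => key ε
      rw [Finset.sum_add_distrib, Finset.sum_add_distrib,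
        hsum (fun ε => (F k ε)^2), hsum (fun ε => (F (k+1) ε)^2)] at h2
      linarith
    · -- k ≥ m : F k = F (k+1)
      apply le_of_eq
      refine Finset.sum_congr rfl fun ε _ => ?_
      congr 1
      apply Finset.sup'_congr hne rfl
      intro w _
      refine Finset.sum_congr rfl fun i _ => ?_
      have h1 : (i:ℕ) < k := lt_of_lt_of_le i.isLt (le_of_not_gt hk)
      simp [C, h1, Nat.lt_succ_of_lt h1]
  have chain : ∀ k, (∑ ε : Fin m → Bool, (F 0 ε)^2) ≤ ∑ ε : Fin m → Bool, (F k ε)^2 := by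
    intro k
    induction k with
    | zero => exact le_refl _
    | succ k ih => exact ih.trans (step k)
  have hF0 : ∀ ε, F 0 ε = W.sup' hne (fun w => ∑ i, rsign (ε i) * σ (∑ r, w r * z i r)) := by
    intro ε
    apply Finset.sup'_congr hne rfl
    intro w _
    refine Finset.sum_congr rfl fun i _ => ?_
    simp [C, t]
  -- final linear bound
  have hlin : ∀ ε : Fin m → Bool,
      (F m ε)^2 ≤ L^2 * B^2 * ∑ r, (∑ i, rsign (ε i) * z i r)^2 := by
    intro ε
    obtain ⟨w0, hw0, hw0e⟩ := Finset.exists_mem_eq_sup' hne (fun w => ∑ i, rsign (ε i) * C m i w)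
    have hFm : F m ε = ∑ i, rsign (ε i) * C m i w0 := hw0e
    have hswap : ∑ i, rsign (ε i) * C m i w0
        = L * ∑ r, w0 r * (∑ i, rsign (ε i) * z i r) := by
      have h1 : ∀ i : Fin m, C m i w0 = L * t w0 i := by intro i; simp [C, i.isLt]
      calc ∑ i, rsign (ε i) * C m i w0 = ∑ i, ∑ r, L * (w0 r * (rsign (ε i) * z i r)) := by
            refine Finset.sum_congr rfl fun i _ => ?_
            rw [h1 i]
            simp only [t, Finset.mul_sum]
            exact Finset.sum_congr rfl fun r _ => by ring
        _ = ∑ r, ∑ i, L * (w0 r * (rsign (ε i) * z i r)) := Finset.sum_comm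
        _ = L * ∑ r, w0 r * (∑ i, rsign (ε i) * z i r) := by
            rw [Finset.mul_sum]
            refine Finset.sum_congr rfl fun r _ => ?_
            rw [Finset.mul_sum, Finset.mul_sum]
    rw [hFm, hswap]
    have hcs := Finset.sum_mul_sq_le_sq_mul_sq univ (fun r => w0 r) (fun r => ∑ i, rsign (ε i) * z i r)
    have hw0B : ∑ r, w0 r ^2 ≤ B^2 := hWB w0 hw0
    have hZnn : (0:ℝ) ≤ ∑ r, (∑ i, rsign (ε i) * z i r)^2 :=
      Finset.sum_nonneg fun r _ => sq_nonneg _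
    calc (L * ∑ r, w0 r * (∑ i, rsign (ε i) * z i r))^2
        = L^2 * (∑ r, w0 r * (∑ i, rsign (ε i) * z i r))^2 := by ring
      _ ≤ L^2 * ((∑ r, w0 r ^2) * ∑ r, (∑ i, rsign (ε i) * z i r)^2) :=
          mul_le_mul_of_nonneg_left hcs (sq_nonneg L)
      _ ≤ L^2 * (B^2 * ∑ r, (∑ i, rsign (ε i) * z i r)^2) :=
          mul_le_mul_of_nonneg_left (mul_le_mul_of_nonneg_right hw0B hZnn) (sq_nonneg L)
      _ = L^2 * B^2 * ∑ r, (∑ i, rsign (ε i) * z i r)^2 := by ring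
  have hZ : ∀ r : Fin n', ∑ ε : Fin m → Bool, (∑ i, rsign (ε i) * z i r)^2
      = 2^m * ∑ i, z i r^2 := by
    intro r
    have hexp : ∀ ε : Fin m → Bool, (∑ i, rsign (ε i) * z i r)^2
        = ∑ i, ∑ i', (z i r * z i' r) * (rsign (ε i) * rsign (ε i')) := by
      intro ε
      rw [sq, Finset.sum_mul_sum]
      refine Finset.sum_congr rfl fun i _ => Finset.sum_congr rfl fun i' _ => by ring
    rw [Finset.sum_congr rfl (fun ε _ => hexp ε)]
    rw [Finset.sum_comm]
    have h1 : ∀ i : Fin m, ∑ ε : Fin m → Bool, ∑ i', (z i r * z i' r) * (rsign (ε i) * rsign (ε i'))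
        = ∑ i', ∑ ε : Fin m → Bool, (z i r * z i' r) * (rsign (ε i) * rsign (ε i')) :=
      fun i => Finset.sum_comm
    rw [Finset.sum_congr rfl (fun i _ => h1 i)]
    have h2 : ∀ (i i' : Fin m), ∑ ε : Fin m → Bool, (z i r * z i' r) * (rsign (ε i) * rsign (ε i'))
        = (z i r * z i' r) * (if i = i' then (2:ℝ)^m else 0) := by
      intro i i'
      rw [← Finset.mul_sum, sum_rsign_mul]
    rw [Finset.sum_congr rfl (fun i _ => Finset.sum_congr rfl (fun i' _ => h2 i i'))]
    have h3 : ∀ i : Fin m, ∑ i', (z i r * z i' r) * (if i = i' then (2:ℝ)^m else 0)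
        = z i r * z i r * 2^m := by
      intro i
      simp only [mul_ite, mul_zero]
      rw [Finset.sum_ite_eq]
      simp
    rw [Finset.sum_congr rfl (fun i _ => h3 i)]
    rw [← Finset.sum_mul]
    have h4 : ∑ i : Fin m, z i r * z i r = ∑ i, z i r ^ 2 :=
      Finset.sum_congr rfl fun i _ => (pow_two (z i r)).symm
    rw [h4]
    ring
  have hstart : ∑ ε : Fin m → Bool,
      (W.sup' ⟨0, hW0⟩ (fun w => ∑ i, rsign (ε i) * σ (∑ r, w r * z i r)))^2
      = ∑ ε : Fin m → Bool, (F 0 ε)^2 :=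
    Finset.sum_congr rfl fun ε _ => by rw [hF0 ε]
  rw [hstart]
  refine le_trans (chain m) ?_
  calc ∑ ε : Fin m → Bool, (F m ε)^2
      ≤ ∑ ε : Fin m → Bool, L^2*B^2 * ∑ r, (∑ i, rsign (ε i) * z i r)^2 :=
        Finset.sum_le_sum fun ε _ => hlin ε
    _ = L^2*B^2 * ∑ r, ∑ ε : Fin m → Bool, (∑ i, rsign (ε i) * z i r)^2 := by
        rw [← Finset.mul_sum, Finset.sum_comm]
    _ = L^2*B^2 * ∑ r, 2^m * ∑ i, z i r ^2 := by
        rw [Finset.sum_congr rfl (fun r _ => hZ r)]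
    _ = 2^m * (L^2*B^2 * ∑ r, ∑ i, z i r^2) := by rw [← Finset.mul_sum]; ring
    _ = 2^m * (L^2*B^2 * ∑ i, ∑ r, z i r^2) := by rw [Finset.sum_comm]

lemma sum_sq_nonneg {k : ℕ} (v : Fin k → ℝ) : (0:ℝ) ≤ ∑ i, v i ^ 2 :=
  Finset.sum_nonneg fun _ _ => sq_nonneg _

lemma sum_sq_le_of_norm_le {k : ℕ} {v : Fin k → ℝ} {c : ℝ} (h : euclNorm v ≤ c) :
    ∑ i, v i ^ 2 ≤ c ^ 2 := by
  have h0 := sum_sq_nonneg v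
  have h1 : ∑ i, v i ^ 2 = (euclNorm v)^2 := (Real.sq_sqrt h0).symm
  rw [h1]
  exact pow_le_pow_left₀ (Real.sqrt_nonneg _) h 2

lemma scatter_mul_sum {n' d : ℕ} (ψ : Fin n' → Fin d) (v : Fin n' → ℝ) (f : Fin d → ℝ) :
    ∑ l, (∑ r, if ψ r = l then v r else 0) * f l = ∑ r, v r * f (ψ r) := by
  classical
  calc ∑ l, (∑ r, if ψ r = l then v r else 0) * f l
      = ∑ l, ∑ r, (if ψ r = l then v r * f l else 0) := by
        refine Finset.sum_congr rfl fun l _ => ?_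
        rw [Finset.sum_mul]
        exact Finset.sum_congr rfl fun r _ => by split <;> simp
    _ = ∑ r, ∑ l, (if ψ r = l then v r * f l else 0) := Finset.sum_comm
    _ = ∑ r, v r * f (ψ r) := by
        refine Finset.sum_congr rfl fun r _ => ?_
        rw [Finset.sum_ite_eq]
        simp

lemma scatter_eval {n' d : ℕ} (ψ : Fin n' → Fin d) (hψ : Function.Injective ψ)
    (v : Fin n' → ℝ) (r : Fin n') :
    (∑ r', if ψ r' = ψ r then v r' else 0) = v r := by
  classical
  have h1 : ∀ r' : Fin n', (if ψ r' = ψ r then v r' else 0) = (if r' = r then v r' else 0) := by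
    intro r'; simp [hψ.eq_iff]
  rw [Finset.sum_congr rfl (fun r' _ => h1 r')]
  rw [Finset.sum_ite_eq']
  simp

lemma scatter_sq_sum {n' d : ℕ} (ψ : Fin n' → Fin d) (hψ : Function.Injective ψ)
    (v : Fin n' → ℝ) :
    ∑ l, (∑ r, if ψ r = l then v r else 0)^2 = ∑ r, v r ^ 2 := by
  have h1 : ∀ l : Fin d, (∑ r, if ψ r = l then v r else 0)^2
      = (∑ r, if ψ r = l then v r else 0) * (fun l => ∑ r, if ψ r = l then v r else 0) l := by
    intro l; rw [pow_two]
  rw [Finset.sum_congr rfl (fun l _ => h1 l), scatter_mul_sum]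
  exact Finset.sum_congr rfl fun r _ => by rw [scatter_eval ψ hψ v r, pow_two]

lemma row_dot {n n' d : ℕ} (φ : Fin n → Fin n' → Fin d) (w : Fin n' → ℝ)
    (jj : Fin n) (xv : Fin d → ℝ) :
    (patchMatrix φ w).mulVec xv jj = ∑ r, w r * xv (φ jj r) := by
  show ∑ l, (∑ r, if φ jj r = l then w r else 0) * xv l = ∑ r, w r * xv (φ jj r)
  exact scatter_mul_sum (φ jj) w xv

lemma w_sq_le_of_spec {n n' d : ℕ} (hn : 0 < n) (φ : Fin n → Fin n' → Fin d)
    (hφ : ∀ j, Function.Injective (φ j)) (B : ℝ) (hB : 0 ≤ B) (w : Fin n' → ℝ)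
    (hspec : specNorm (patchMatrix φ w) ≤ B) : ∑ r, w r ^ 2 ≤ B ^ 2 := by
  classical
  set c := Real.sqrt (∑ r, w r ^ 2) with hc
  have hsum0 : 0 ≤ ∑ r, w r ^ 2 := sum_sq_nonneg w
  have hc2 : c ^ 2 = ∑ r, w r ^ 2 := Real.sq_sqrt hsum0
  rcases eq_or_lt_of_le (Real.sqrt_nonneg (∑ r, w r ^ 2)) with h0 | hcpos
  · have hc0 : c = 0 := by rw [hc, ← h0]
    rw [← hc2, hc0]
    norm_num
    positivity
  · have hcne : c ≠ 0 := ne_of_gt hcpos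
    set j0 : Fin n := ⟨0, hn⟩ with hj0
    set ψ : Fin n' → Fin d := φ j0 with hψdef
    set xh : Fin d → ℝ := fun l => ∑ r, if ψ r = l then w r / c else 0 with hxh
    have hxhnorm : euclNorm xh = 1 := by
      unfold euclNorm
      rw [show ∑ l, xh l ^ 2 = ∑ r, (w r / c)^2 from scatter_sq_sum ψ (hφ j0) _]
      have : ∑ r, (w r / c)^2 = 1 := by
        simp only [div_pow]
        rw [← Finset.sum_div, ← hc2]
        field_simp
      rw [this, Real.sqrt_one]
    have hval : (patchMatrix φ w).mulVec xh j0 = c := by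
      rw [row_dot]
      have h1 : ∀ r : Fin n', xh (ψ r) = w r / c := fun r => scatter_eval ψ (hφ j0) _ r
      rw [Finset.sum_congr rfl (fun r _ => by rw [h1 r] : ∀ r ∈ univ, w r * xh (ψ r) = w r * (w r / c))]
      have h2 : ∑ r, w r * (w r / c) = (∑ r, w r ^ 2) / c := by
        rw [Finset.sum_div]
        exact Finset.sum_congr rfl fun r _ => by rw [pow_two]; ring
      rw [h2, ← hc2]
      field_simp
    have hbdd : BddAbove {r : ℝ | ∃ xx : Fin d → ℝ, euclNorm xx = 1 ∧
        r = euclNorm ((patchMatrix φ w).mulVec xx)} := by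
      refine ⟨Real.sqrt ((n:ℝ) * ∑ r, w r ^ 2), ?_⟩
      rintro s ⟨xx, hxx, rfl⟩
      unfold euclNorm
      apply Real.sqrt_le_sqrt
      have hxx1 : ∑ l, xx l ^ 2 = 1 := by
        have := congrArg (fun y => y^2) hxx
        simpa [euclNorm, Real.sq_sqrt (sum_sq_nonneg xx)] using this
      calc ∑ jj, ((patchMatrix φ w).mulVec xx jj)^2
          ≤ ∑ _jj : Fin n, ∑ r, w r ^ 2 := by
            apply Finset.sum_le_sum
            intro jj _
            rw [row_dot]
            have hcs := Finset.sum_mul_sq_le_sq_mul_sq univ (fun r => w r) (fun r => xx (φ jj r))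
            have hsub : ∑ r, xx (φ jj r)^2 ≤ 1 := by
              have himg : ∑ l ∈ univ.image (φ jj), xx l ^ 2 = ∑ r, xx (φ jj r)^2 :=
                Finset.sum_image (fun a _ b _ hh => hφ jj hh)
              rw [← himg, ← hxx1]
              exact Finset.sum_le_sum_of_subset_of_nonneg (Finset.subset_univ _)
                (fun l _ _ => sq_nonneg _)
            nlinarith [sum_sq_nonneg w]
        _ = (n:ℝ) * ∑ r, w r ^ 2 := by
            rw [Finset.sum_const, Finset.card_univ, Fintype.card_fin, nsmul_eq_mul]
    have hmem : euclNorm ((patchMatrix φ w).mulVec xh) ∈ {r : ℝ | ∃ xx : Fin d → ℝ,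
        euclNorm xx = 1 ∧ r = euclNorm ((patchMatrix φ w).mulVec xx)} := ⟨xh, hxhnorm, rfl⟩
    have hcle : c ≤ euclNorm ((patchMatrix φ w).mulVec xh) := by
      unfold euclNorm
      have h1 : c^2 ≤ ∑ jj, ((patchMatrix φ w).mulVec xh jj)^2 := by
        have h2 : ((patchMatrix φ w).mulVec xh j0)^2 ≤ ∑ jj, ((patchMatrix φ w).mulVec xh jj)^2 :=
          Finset.single_le_sum (f := fun jj => ((patchMatrix φ w).mulVec xh jj)^2)
            (fun jj _ => sq_nonneg _) (Finset.mem_univ j0)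
        rwa [hval] at h2
      calc c = Real.sqrt (c^2) := (Real.sqrt_sq hcpos.le).symm
        _ ≤ _ := Real.sqrt_le_sqrt h1
    have hfinal : c ≤ B := le_trans hcle (le_trans (le_csSup hbdd hmem) hspec)
    rw [← hc2]
    nlinarith [hcpos.le]

lemma overlap_bound {n n' d : ℕ} (φ : Fin n → Fin n' → Fin d)
    (hφ : ∀ j, Function.Injective (φ j)) (O : ℕ)
    (hO : ∀ l : Fin d, Nat.card {j : Fin n // ∃ r, φ j r = l} ≤ O) (y : Fin d → ℝ) :
    ∑ j, ∑ r, y (φ j r) ^ 2 ≤ (O:ℝ) * ∑ l, y l ^ 2 := by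
  classical
  have h1 : ∀ (j : Fin n) (r : Fin n'), y (φ j r)^2 = ∑ l, if φ j r = l then y l ^2 else 0 := by
    intro j r
    rw [Finset.sum_ite_eq]
    simp
  calc ∑ j, ∑ r, y (φ j r)^2
      = ∑ j, ∑ r, ∑ l, (if φ j r = l then y l ^2 else 0) := by
        exact Finset.sum_congr rfl fun j _ => Finset.sum_congr rfl fun r _ => h1 j r
    _ = ∑ j, ∑ l, ∑ r, (if φ j r = l then y l ^2 else 0) := by
        exact Finset.sum_congr rfl fun j _ => Finset.sum_comm
    _ = ∑ l, ∑ j, ∑ r, (if φ j r = l then y l ^2 else 0) := Finset.sum_comm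
    _ ≤ ∑ l, (O:ℝ) * y l ^2 := by
        apply Finset.sum_le_sum
        intro l _
        have h2 : ∀ (j : Fin n) (r : Fin n'), (if φ j r = l then y l ^2 else 0)
            = y l ^ 2 * (if φ j r = l then (1:ℝ) else 0) := by
          intro j r; split <;> ring
        rw [Finset.sum_congr rfl (fun j _ => Finset.sum_congr rfl fun r _ => h2 j r)]
        rw [Finset.sum_congr rfl (fun j (_ : j ∈ univ) => (Finset.mul_sum _ _ _).symm)]
        rw [← Finset.mul_sum]
        have hcnt : ∑ j, ∑ r, (if φ j r = l then (1:ℝ) else 0) ≤ (O:ℝ) := by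
          have hjr : ∀ j : Fin n, ∑ r, (if φ j r = l then (1:ℝ) else 0)
              ≤ (if (∃ r, φ j r = l) then (1:ℝ) else 0) := by
            intro j
            by_cases h : ∃ r, φ j r = l
            · obtain ⟨r0, hr0⟩ := h
              have h3 : ∀ r : Fin n', (if φ j r = l then (1:ℝ) else 0)
                  = (if r = r0 then (1:ℝ) else 0) := by
                intro r
                have : φ j r = l ↔ r = r0 := by
                  constructor
                  · intro hh; exact hφ j (hh.trans hr0.symm)
                  · rintro rfl; exact hr0
                simp [this]
              have h5 : (if (∃ r, φ j r = l) then (1:ℝ) else 0) = 1 := if_pos ⟨r0, hr0⟩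
              rw [Finset.sum_congr rfl (fun r _ => h3 r), Finset.sum_ite_eq', h5]
              simp
            · push_neg at h
              simp [h]
          calc ∑ j, ∑ r, (if φ j r = l then (1:ℝ) else 0)
              ≤ ∑ j, (if (∃ r, φ j r = l) then (1:ℝ) else 0) := Finset.sum_le_sum fun j _ => hjr j
            _ = ((univ.filter (fun j => ∃ r, φ j r = l)).card : ℝ) := by
                rw [Finset.sum_boole]
            _ ≤ (O:ℝ) := by
                have h4 := hO l
                rw [Nat.card_eq_fintype_card, Fintype.card_subtype] at h4
                exact_mod_cast h4
        calc y l ^2 * ∑ j, ∑ r, (if φ j r = l then (1:ℝ) else 0)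
            ≤ y l ^2 * (O:ℝ) := mul_le_mul_of_nonneg_left hcnt (sq_nonneg _)
          _ = (O:ℝ) * y l ^2 := by ring
    _ = (O:ℝ) * ∑ l, y l ^2 := by rw [Finset.mul_sum]


end RLM16

open RLM16 Finset

set_option maxHeartbeats 2000000 in
/-- Rademacher complexity bound for one-hidden-layer convolutional networks
`x ↦ uᵀσ(Wx)` with `‖u‖ ≤ b`, `W` conforming to `Φ`, `‖W‖ ≤ B`, `L`-Lipschitz `σ`
with `σ(0)=0`, overlap `O_Φ ≤ O`: at most `b·B·b_x·L·√(2O/m)`. -/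

theorem stmt16 (n n' d m : ℕ) (hm : 0 < m) (L b B bx : ℝ)
    (hb : 0 ≤ b) (hB : 0 ≤ B) (hL : 0 ≤ L)
    (σ : ℝ → ℝ) (hσ : ∀ a c : ℝ, |σ a - σ c| ≤ L * |a - c|) (hσ0 : σ 0 = 0)
    (φ : Fin n → Fin n' → Fin d) (hφ : ∀ j, Function.Injective (φ j))
    (O : ℕ) (hO : ∀ l : Fin d, Nat.card {j : Fin n // ∃ r, φ j r = l} ≤ O)
    (x : Fin m → Fin d → ℝ) (hx : ∀ i, euclNorm (x i) ≤ bx) :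
    rademacherExp m (fun ε =>
        ⨆ p : {p : (Fin n → ℝ) × (Fin n' → ℝ) //
                euclNorm p.1 ≤ b ∧ specNorm (patchMatrix φ p.2) ≤ B},
          (1 / (m : ℝ)) * ∑ i, ε i * ∑ j, p.1.1 j * σ (∑ r, p.1.2 r * x i (φ j r)))
      ≤ b * B * bx * L * Real.sqrt (2 * O / m) := by
  classical
  have hmR : (0:ℝ) < (m:ℝ) := by exact_mod_cast hm
  have hbx : 0 ≤ bx := le_trans (Real.sqrt_nonneg _) (hx ⟨0, hm⟩)
  have hRHS0 : 0 ≤ b * B * bx * L * Real.sqrt (2 * O / m) :=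
    mul_nonneg (mul_nonneg (mul_nonneg (mul_nonneg hb hB) hbx) hL) (Real.sqrt_nonneg _)
  have hzero_u : euclNorm (0 : Fin n → ℝ) ≤ b := by
    unfold euclNorm
    simpa using hb
  have hzero_w : specNorm (patchMatrix φ (0 : Fin n' → ℝ)) ≤ B := by
    unfold specNorm
    apply Real.sSup_le _ hB
    rintro r ⟨xx, hxx, rfl⟩
    have hzm : (patchMatrix φ (0 : Fin n' → ℝ)).mulVec xx = fun _ => 0 := by
      funext jj
      rw [row_dot]
      simp
    rw [hzm]
    unfold euclNorm
    simpa using hB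
  set SubT := {p : (Fin n → ℝ) × (Fin n' → ℝ) //
      euclNorm p.1 ≤ b ∧ specNorm (patchMatrix φ p.2) ≤ B} with hSubT
  have p0 : SubT := ⟨((0 : Fin n → ℝ), (0 : Fin n' → ℝ)), ⟨hzero_u, hzero_w⟩⟩
  haveI : Nonempty SubT := ⟨p0⟩
  by_cases htriv : n = 0 ∨ n' = 0
  · -- trivial case: all values are 0
    have hval0 : ∀ (g : Fin m → ℝ) (p : SubT),
        (1 / (m : ℝ)) * ∑ i, g i * ∑ j, p.1.1 j * σ (∑ r, p.1.2 r * x i (φ j r)) = 0 := by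
      intro g p
      rcases htriv with h | h
      · have : ∀ i : Fin m, ∑ j, p.1.1 j * σ (∑ r, p.1.2 r * x i (φ j r)) = 0 := by
          intro i
          subst h
          simp
        rw [Finset.sum_congr rfl (fun i _ => by rw [this i, mul_zero])]
        simp
      · have : ∀ i : Fin m, ∑ j, p.1.1 j * σ (∑ r, p.1.2 r * x i (φ j r)) = 0 := by
          intro i
          subst h
          simp [hσ0]
        rw [Finset.sum_congr rfl (fun i _ => by rw [this i, mul_zero])]
        simp
    have hfun : rademacherExp m (fun ε =>
        ⨆ p : SubT, (1 / (m : ℝ)) * ∑ i, ε i * ∑ j, p.1.1 j * σ (∑ r, p.1.2 r * x i (φ j r))) = 0 := by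
      unfold rademacherExp
      have h1 : ∀ ε : Fin m → Bool,
          (⨆ p : SubT, (1 / (m : ℝ)) * ∑ i, (if ε i then (1:ℝ) else -1) * ∑ j, p.1.1 j * σ (∑ r, p.1.2 r * x i (φ j r))) = 0 := by
        intro ε
        have h2 : (fun p : SubT => (1 / (m : ℝ)) * ∑ i, (if ε i then (1:ℝ) else -1) * ∑ j, p.1.1 j * σ (∑ r, p.1.2 r * x i (φ j r)))
            = fun _ => (0:ℝ) := funext fun p => hval0 _ p
        rw [h2]
        exact ciSup_const
      rw [Finset.sum_congr rfl (fun ε _ => h1 ε)]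
      simp
    rw [hfun]
    exact hRHS0
  · push_neg at htriv
    have hnpos : 0 < n := Nat.pos_of_ne_zero htriv.1
    apply le_of_forall_pos_le_add
    intro η hη
    -- near-maximizers
    have hch : ∀ ε : Fin m → Bool, ∃ p : SubT,
        (⨆ q : SubT, (1 / (m : ℝ)) * ∑ i, (if ε i then (1:ℝ) else -1) * ∑ j, q.1.1 j * σ (∑ r, q.1.2 r * x i (φ j r)))
          ≤ (1 / (m : ℝ)) * ∑ i, (if ε i then (1:ℝ) else -1) * ∑ j, p.1.1 j * σ (∑ r, p.1.2 r * x i (φ j r)) + η := by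
      intro ε
      obtain ⟨p, hp⟩ := exists_lt_of_lt_ciSup
        (sub_lt_self (⨆ q : SubT, (1 / (m : ℝ)) * ∑ i, (if ε i then (1:ℝ) else -1) * ∑ j, q.1.1 j * σ (∑ r, q.1.2 r * x i (φ j r))) hη)
      exact ⟨p, by linarith⟩
    choose pf hpf using hch
    set F0 : Finset SubT := insert p0 (Finset.image pf Finset.univ) with hF0
    have hp0F : p0 ∈ F0 := Finset.mem_insert_self _ _
    have hF0ne : F0.Nonempty := ⟨p0, hp0F⟩
    set W0 : Finset (Fin n' → ℝ) := insert 0 (F0.image fun p => p.1.2) with hW0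
    have hW0mem : (0 : Fin n' → ℝ) ∈ W0 := Finset.mem_insert_self _ _
    have hW0B : ∀ w ∈ W0, ∑ r, w r ^ 2 ≤ B ^ 2 := by
      intro w hw
      rcases Finset.mem_insert.mp hw with rfl | hw'
      · have : ∑ r : Fin n', (0:ℝ) ^ 2 = 0 := by simp
        rw [show ∑ r : Fin n', ((0 : Fin n' → ℝ) r) ^ 2 = 0 by simp]
        positivity
      · obtain ⟨p, _, rfl⟩ := Finset.mem_image.mp hw'
        exact w_sq_le_of_spec hnpos φ hφ B hB _ p.2.2
    -- abbreviation for T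
    set T : SubT → (Fin m → Bool) → ℝ :=
      fun p ε => ∑ i, rsign (ε i) * ∑ j, p.1.1 j * σ (∑ r, p.1.2 r * x i (φ j r)) with hT
    set X : (Fin m → Bool) → ℝ := fun ε => F0.sup' hF0ne (fun p => T p ε) with hX
    -- Step A : LHS ≤ (1/m) * mean of X + η
    have hstepA : rademacherExp m (fun ε =>
        ⨆ p : SubT, (1 / (m : ℝ)) * ∑ i, ε i * ∑ j, p.1.1 j * σ (∑ r, p.1.2 r * x i (φ j r)))
        ≤ (1 / (m:ℝ)) * ((∑ ε : Fin m → Bool, X ε) / 2 ^ m) + η := by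
      unfold rademacherExp
      have hper : ∀ ε : Fin m → Bool,
          (⨆ p : SubT, (1 / (m : ℝ)) * ∑ i, (if ε i then (1:ℝ) else -1) * ∑ j, p.1.1 j * σ (∑ r, p.1.2 r * x i (φ j r)))
            ≤ (1 / (m:ℝ)) * X ε + η := by
        intro ε
        refine le_trans (hpf ε) ?_
        have h1 : T (pf ε) ε ≤ X ε :=
          Finset.le_sup' (f := fun p => T p ε) (Finset.mem_insert_of_mem (Finset.mem_image_of_mem pf (Finset.mem_univ ε)))
        have h2 : (1 / (m:ℝ)) * T (pf ε) ε ≤ (1 / (m:ℝ)) * X ε :=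
          mul_le_mul_of_nonneg_left h1 (by positivity)
        have h3 : ∑ i, (if ε i then (1:ℝ) else -1) * ∑ j, (pf ε).1.1 j * σ (∑ r, (pf ε).1.2 r * x i (φ j r)) = T (pf ε) ε := rfl
        rw [h3]
        linarith
      calc (∑ ε : Fin m → Bool, ⨆ p : SubT, (1 / (m : ℝ)) * ∑ i, (if ε i then (1:ℝ) else -1) * ∑ j, p.1.1 j * σ (∑ r, p.1.2 r * x i (φ j r))) / 2 ^ m
          ≤ (∑ ε : Fin m → Bool, ((1 / (m:ℝ)) * X ε + η)) / 2 ^ m := by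
            apply div_le_div_of_nonneg_right (Finset.sum_le_sum fun ε _ => hper ε)
            positivity
        _ = (1 / (m:ℝ)) * ((∑ ε : Fin m → Bool, X ε) / 2 ^ m) + η := by
            rw [Finset.sum_add_distrib, Finset.sum_const, ← Finset.mul_sum, card_bool_fun]
            have h2m : ((2:ℝ))^m ≠ 0 := by positivity
            push_cast
            field_simp
            ring
    -- Step C: second moment bound
    have hXsq : ∑ ε : Fin m → Bool, (X ε)^2
        ≤ 2^m * (2 * b^2 * L^2 * B^2 * ((O:ℝ) * ((m:ℝ) * bx^2))) := by
      have hpt : ∀ ε : Fin m → Bool, (X ε)^2 ≤ b^2 * ∑ j,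
          W0.sup' ⟨0, hW0mem⟩ (fun w => (∑ i, rsign (ε i) * σ (∑ r, w r * x i (φ j r)))^2) := by
        intro ε
        obtain ⟨p, hpF, hpe⟩ := Finset.exists_mem_eq_sup' hF0ne (fun p => T p ε)
        have hXe : X ε = T p ε := hpe
        have hswap : T p ε = ∑ j, p.1.1 j * (∑ i, rsign (ε i) * σ (∑ r, p.1.2 r * x i (φ j r))) := by
          rw [hT]
          calc ∑ i, rsign (ε i) * ∑ j, p.1.1 j * σ (∑ r, p.1.2 r * x i (φ j r))
              = ∑ i, ∑ j, p.1.1 j * (rsign (ε i) * σ (∑ r, p.1.2 r * x i (φ j r))) := by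
                refine Finset.sum_congr rfl fun i _ => ?_
                rw [Finset.mul_sum]
                exact Finset.sum_congr rfl fun j _ => by ring
            _ = ∑ j, ∑ i, p.1.1 j * (rsign (ε i) * σ (∑ r, p.1.2 r * x i (φ j r))) := Finset.sum_comm
            _ = ∑ j, p.1.1 j * (∑ i, rsign (ε i) * σ (∑ r, p.1.2 r * x i (φ j r))) := by
                refine Finset.sum_congr rfl fun j _ => ?_
                rw [Finset.mul_sum]
        have hcs := Finset.sum_mul_sq_le_sq_mul_sq univ (fun j => p.1.1 j)
          (fun j => ∑ i, rsign (ε i) * σ (∑ r, p.1.2 r * x i (φ j r)))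
        have hu : ∑ j, p.1.1 j ^ 2 ≤ b^2 := sum_sq_le_of_norm_le p.2.1
        have hwmem : p.1.2 ∈ W0 := Finset.mem_insert_of_mem (Finset.mem_image_of_mem _ hpF)
        have hVle : ∀ j : Fin n, (∑ i, rsign (ε i) * σ (∑ r, p.1.2 r * x i (φ j r)))^2
            ≤ W0.sup' ⟨0, hW0mem⟩ (fun w => (∑ i, rsign (ε i) * σ (∑ r, w r * x i (φ j r)))^2) :=
          fun j => Finset.le_sup'
            (f := fun w => (∑ i, rsign (ε i) * σ (∑ r, w r * x i (φ j r)))^2) hwmem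
        have hsumV : (0:ℝ) ≤ ∑ j, (∑ i, rsign (ε i) * σ (∑ r, p.1.2 r * x i (φ j r)))^2 :=
          Finset.sum_nonneg fun j _ => sq_nonneg _
        rw [hXe, hswap]
        calc (∑ j, p.1.1 j * (∑ i, rsign (ε i) * σ (∑ r, p.1.2 r * x i (φ j r))))^2
            ≤ (∑ j, p.1.1 j ^ 2) * ∑ j, (∑ i, rsign (ε i) * σ (∑ r, p.1.2 r * x i (φ j r)))^2 := hcs
          _ ≤ b^2 * ∑ j, W0.sup' ⟨0, hW0mem⟩
                (fun w => (∑ i, rsign (ε i) * σ (∑ r, w r * x i (φ j r)))^2) :=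
              mul_le_mul hu (Finset.sum_le_sum fun j _ => hVle j) hsumV (by positivity)
      have hj : ∀ j : Fin n, ∑ ε : Fin m → Bool,
          W0.sup' ⟨0, hW0mem⟩ (fun w => (∑ i, rsign (ε i) * σ (∑ r, w r * x i (φ j r)))^2)
          ≤ 2^m * (2 * L^2 * B^2 * ∑ i, ∑ r, (x i (φ j r))^2) := by
        intro j
        have hsplit : ∀ ε : Fin m → Bool,
            W0.sup' ⟨0, hW0mem⟩ (fun w => (∑ i, rsign (ε i) * σ (∑ r, w r * x i (φ j r)))^2)
            ≤ (W0.sup' ⟨0, hW0mem⟩ (fun w => ∑ i, rsign (ε i) * σ (∑ r, w r * x i (φ j r))))^2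
              + (W0.sup' ⟨0, hW0mem⟩ (fun w => ∑ i, rsign ((negAll ε) i) * σ (∑ r, w r * x i (φ j r))))^2 := by
          intro ε
          apply Finset.sup'_le
          intro w hw
          have hneg : ∑ i, rsign ((negAll ε) i) * σ (∑ r, w r * x i (φ j r))
              = - ∑ i, rsign (ε i) * σ (∑ r, w r * x i (φ j r)) := by
            rw [← Finset.sum_neg_distrib]
            refine Finset.sum_congr rfl fun i _ => ?_
            rw [negAll_apply, rsign_not]
            ring
          have h1 : ∑ i, rsign (ε i) * σ (∑ r, w r * x i (φ j r))
              ≤ W0.sup' ⟨0, hW0mem⟩ (fun w => ∑ i, rsign (ε i) * σ (∑ r, w r * x i (φ j r))) :=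
            Finset.le_sup' (f := fun w => ∑ i, rsign (ε i) * σ (∑ r, w r * x i (φ j r))) hw
          have h2 : ∑ i, rsign ((negAll ε) i) * σ (∑ r, w r * x i (φ j r))
              ≤ W0.sup' ⟨0, hW0mem⟩ (fun w => ∑ i, rsign ((negAll ε) i) * σ (∑ r, w r * x i (φ j r))) :=
            Finset.le_sup' (f := fun w => ∑ i, rsign ((negAll ε) i) * σ (∑ r, w r * x i (φ j r))) hw
          rw [hneg] at h2
          set V := ∑ i, rsign (ε i) * σ (∑ r, w r * x i (φ j r)) with hV
          set P := W0.sup' ⟨0, hW0mem⟩ (fun w => ∑ i, rsign (ε i) * σ (∑ r, w r * x i (φ j r))) with hP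
          set M := W0.sup' ⟨0, hW0mem⟩ (fun w => ∑ i, rsign ((negAll ε) i) * σ (∑ r, w r * x i (φ j r))) with hM
          rcases le_or_gt 0 V with hc | hc
          · have hP0 : 0 ≤ P := le_trans hc h1
            nlinarith [sq_nonneg M, mul_nonneg hc (sub_nonneg.2 h1), mul_nonneg hP0 (sub_nonneg.2 h1)]
          · have hM0 : 0 ≤ M := le_trans (by linarith) h2
            nlinarith [sq_nonneg P, mul_nonneg (by linarith : (0:ℝ) ≤ -V) (sub_nonneg.2 h2),
              mul_nonneg hM0 (sub_nonneg.2 h2)]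
        have hnegsum : ∑ ε : Fin m → Bool,
            (W0.sup' ⟨0, hW0mem⟩ (fun w => ∑ i, rsign ((negAll ε) i) * σ (∑ r, w r * x i (φ j r))))^2
            = ∑ ε : Fin m → Bool,
            (W0.sup' ⟨0, hW0mem⟩ (fun w => ∑ i, rsign (ε i) * σ (∑ r, w r * x i (φ j r))))^2 :=
          Equiv.sum_comp negAll
            (fun ε => (W0.sup' ⟨0, hW0mem⟩ (fun w => ∑ i, rsign (ε i) * σ (∑ r, w r * x i (φ j r))))^2)
        have hcon : ∑ ε : Fin m → Bool,
            (W0.sup' ⟨0, hW0mem⟩ (fun w => ∑ i, rsign (ε i) * σ (∑ r, w r * x i (φ j r))))^2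
            ≤ 2^m * (L^2 * B^2 * ∑ i, ∑ r, (x i (φ j r))^2) :=
          smc m n' L B hL hB σ hσ hσ0 (fun i r => x i (φ j r)) W0 hW0mem hW0B
        calc ∑ ε : Fin m → Bool,
            W0.sup' ⟨0, hW0mem⟩ (fun w => (∑ i, rsign (ε i) * σ (∑ r, w r * x i (φ j r)))^2)
            ≤ ∑ ε : Fin m → Bool,
              ((W0.sup' ⟨0, hW0mem⟩ (fun w => ∑ i, rsign (ε i) * σ (∑ r, w r * x i (φ j r))))^2
              + (W0.sup' ⟨0, hW0mem⟩ (fun w => ∑ i, rsign ((negAll ε) i) * σ (∑ r, w r * x i (φ j r))))^2) :=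
              Finset.sum_le_sum fun ε _ => hsplit ε
          _ = ∑ ε : Fin m → Bool,
              (W0.sup' ⟨0, hW0mem⟩ (fun w => ∑ i, rsign (ε i) * σ (∑ r, w r * x i (φ j r))))^2
              + ∑ ε : Fin m → Bool,
              (W0.sup' ⟨0, hW0mem⟩ (fun w => ∑ i, rsign ((negAll ε) i) * σ (∑ r, w r * x i (φ j r))))^2 :=
              Finset.sum_add_distrib
          _ = 2 * ∑ ε : Fin m → Bool,
              (W0.sup' ⟨0, hW0mem⟩ (fun w => ∑ i, rsign (ε i) * σ (∑ r, w r * x i (φ j r))))^2 := by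
              rw [hnegsum]; ring
          _ ≤ 2 * (2^m * (L^2 * B^2 * ∑ i, ∑ r, (x i (φ j r))^2)) := by linarith
          _ = 2^m * (2 * L^2 * B^2 * ∑ i, ∑ r, (x i (φ j r))^2) := by ring
      calc ∑ ε : Fin m → Bool, (X ε)^2
          ≤ ∑ ε : Fin m → Bool, (b^2 * ∑ j,
              W0.sup' ⟨0, hW0mem⟩ (fun w => (∑ i, rsign (ε i) * σ (∑ r, w r * x i (φ j r)))^2)) :=
            Finset.sum_le_sum fun ε _ => hpt ε
        _ = b^2 * ∑ j, ∑ ε : Fin m → Bool,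
              W0.sup' ⟨0, hW0mem⟩ (fun w => (∑ i, rsign (ε i) * σ (∑ r, w r * x i (φ j r)))^2) := by
            rw [← Finset.mul_sum, Finset.sum_comm]
        _ ≤ b^2 * ∑ j, 2^m * (2 * L^2 * B^2 * ∑ i, ∑ r, (x i (φ j r))^2) :=
            mul_le_mul_of_nonneg_left (Finset.sum_le_sum fun j _ => hj j) (sq_nonneg b)
        _ = 2^m * (2 * b^2 * L^2 * B^2 * ∑ j, ∑ i, ∑ r, (x i (φ j r))^2) := by
            have h5 : ∀ j : Fin n, 2^m * (2 * L^2 * B^2 * ∑ i, ∑ r, (x i (φ j r))^2)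
                = (2^m * (2 * L^2 * B^2)) * (∑ i, ∑ r, (x i (φ j r))^2) := fun j => by ring
            rw [Finset.sum_congr rfl fun j _ => h5 j, ← Finset.mul_sum]
            ring
        _ ≤ 2^m * (2 * b^2 * L^2 * B^2 * ((O:ℝ) * ((m:ℝ) * bx^2))) := by
            have hov : ∑ j, ∑ i, ∑ r, (x i (φ j r))^2 ≤ (O:ℝ) * ((m:ℝ) * bx^2) := by
              rw [show (∑ j, ∑ i, ∑ r, (x i (φ j r))^2 : ℝ) = ∑ i, ∑ j, ∑ r, (x i (φ j r))^2
                from Finset.sum_comm]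
              calc ∑ i, ∑ j, ∑ r, (x i (φ j r))^2 ≤ ∑ _i : Fin m, (O:ℝ) * bx^2 := by
                    apply Finset.sum_le_sum
                    intro i _
                    refine le_trans (overlap_bound φ hφ O hO (x i)) ?_
                    exact mul_le_mul_of_nonneg_left (sum_sq_le_of_norm_le (hx i)) (by positivity)
                _ = (m:ℝ) * ((O:ℝ) * bx^2) := by
                    rw [Finset.sum_const, Finset.card_univ, Fintype.card_fin, nsmul_eq_mul]
                _ = (O:ℝ) * ((m:ℝ) * bx^2) := by ring
            have hc1 : (0:ℝ) ≤ 2 * b^2 * L^2 * B^2 := by positivity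
            have hc2 : (0:ℝ) ≤ (2:ℝ)^m := by positivity
            exact mul_le_mul_of_nonneg_left (mul_le_mul_of_nonneg_left hov hc1) hc2
    -- Step B : Jensen
    have hB2 : (∑ ε : Fin m → Bool, X ε) / 2^m
        ≤ Real.sqrt (2 * b^2 * L^2 * B^2 * ((O:ℝ) * ((m:ℝ) * bx^2))) := by
      have hcs : (∑ ε : Fin m → Bool, X ε)^2 ≤ 2^m * ∑ ε : Fin m → Bool, (X ε)^2 := by
        have h := Finset.sum_mul_sq_le_sq_mul_sq univ (fun _ : Fin m → Bool => (1:ℝ)) X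
        simp only [one_pow, one_mul, Finset.sum_const, Finset.card_univ, nsmul_eq_mul, mul_one] at h
        have hcard : ((Fintype.card (Fin m → Bool) : ℕ) : ℝ) = (2:ℝ)^m := by
          rw [← Finset.card_univ, card_bool_fun]
          push_cast
          ring
        rw [hcard] at h
        exact h
      have htarget_nn : (0:ℝ) ≤ 2 * b^2 * L^2 * B^2 * ((O:ℝ) * ((m:ℝ) * bx^2)) := by positivity
      rcases le_or_gt ((∑ ε : Fin m → Bool, X ε) / 2^m) 0 with h | h
      · exact le_trans h (Real.sqrt_nonneg _)
      · apply (Real.le_sqrt h.le htarget_nn).mpr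
        rw [div_pow, div_le_iff₀ (by positivity : (0:ℝ) < ((2:ℝ)^m)^2)]
        calc (∑ ε : Fin m → Bool, X ε)^2 ≤ 2^m * ∑ ε : Fin m → Bool, (X ε)^2 := hcs
          _ ≤ 2^m * (2^m * (2 * b^2 * L^2 * B^2 * ((O:ℝ) * ((m:ℝ) * bx^2)))) :=
              mul_le_mul_of_nonneg_left hXsq (by positivity)
          _ = 2 * b^2 * L^2 * B^2 * ((O:ℝ) * ((m:ℝ) * bx^2)) * ((2:ℝ)^m)^2 := by ring
    -- Step D : algebra on square roots
    have hblbx : (0:ℝ) ≤ b * L * B * bx :=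
      mul_nonneg (mul_nonneg (mul_nonneg hb hL) hB) hbx
    have hsqrt_eq : Real.sqrt (2 * b^2 * L^2 * B^2 * ((O:ℝ) * ((m:ℝ) * bx^2)))
        = b * L * B * bx * Real.sqrt (2 * (O:ℝ) * (m:ℝ)) := by
      rw [show 2 * b^2 * L^2 * B^2 * ((O:ℝ) * ((m:ℝ) * bx^2))
          = (b * L * B * bx)^2 * (2 * (O:ℝ) * (m:ℝ)) by ring]
      rw [Real.sqrt_mul (sq_nonneg _), Real.sqrt_sq hblbx]
    have hdiv : Real.sqrt (2 * (O:ℝ) * (m:ℝ)) / (m:ℝ) = Real.sqrt (2 * (O:ℝ) / (m:ℝ)) := by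
      have hm0 : (m:ℝ) ≠ 0 := ne_of_gt hmR
      rw [show 2 * (O:ℝ) * (m:ℝ) = (2 * (O:ℝ) / (m:ℝ)) * (m:ℝ)^2 by field_simp]
      rw [Real.sqrt_mul (by positivity : (0:ℝ) ≤ 2 * (O:ℝ) / (m:ℝ)), Real.sqrt_sq hmR.le]
      field_simp
    calc rademacherExp m (fun ε =>
        ⨆ p : SubT, (1 / (m : ℝ)) * ∑ i, ε i * ∑ j, p.1.1 j * σ (∑ r, p.1.2 r * x i (φ j r)))
        ≤ (1 / (m:ℝ)) * ((∑ ε : Fin m → Bool, X ε) / 2 ^ m) + η := hstepA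
      _ ≤ (1 / (m:ℝ)) * (b * L * B * bx * Real.sqrt (2 * (O:ℝ) * (m:ℝ))) + η := by
          have h6 := hB2
          rw [hsqrt_eq] at h6
          have h7 : (0:ℝ) ≤ 1 / (m:ℝ) := by positivity
          exact add_le_add (mul_le_mul_of_nonneg_left h6 h7) le_rfl
      _ = b * B * bx * L * Real.sqrt (2 * (O:ℝ) / (m:ℝ)) + η := by
          rw [← hdiv]
          ring
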